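/- Every equilibrium graph in the max-distance network creation game has no cycle of length less than 2α − 1. -/

import Mathlib

/-!
Max-distance network creation game (Demaine et al.):
`n` agents, agent `v` buys edges to the agents in `s v`, each at cost `α`.
The resulting graph has an edge `(u,v)` iff `u ∈ s v` or `v ∈ s u`.
Agent `v`'s cost is `α * |s v|` plus its eccentricity (max distance, `⊤` if
disconnected). A profile is a (pure Nash) equilibrium if no agent can strictly
decrease its cost by unilaterally changing its edge set.
-/

open SimpleGraph
open scoped ENNReal

namespace NCG

/-- The undirected graph created by strategy profile `s`. -/
def graph (n : ℕ) (s : Fin n → Finset (Fin n)) : SimpleGraph (Fin n) :=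
  SimpleGraph.fromRel (fun u v => v ∈ s u)

/-- Eccentricity `D(v) = max_u d_G(v,u)`, valued in `ℕ∞`. -/
noncomputable def ecc {n : ℕ} (G : SimpleGraph (Fin n)) (v : Fin n) : ℕ∞ :=
  ⨆ u, G.edist v u

/-- The cost of agent `v` under profile `s`: `α·|s v| + D(v)` (infinite if the
graph is disconnected). -/
noncomputable def cost {n : ℕ} (α : ℝ) (s : Fin n → Finset (Fin n)) (v : Fin n) : ℝ≥0∞ :=
  ENNReal.ofReal α * (s v).card + (ecc (graph n s) v : ℝ≥0∞)

/-- Pure Nash equilibrium: no agent can strictly decrease its cost by a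
unilateral deviation. -/
def IsEquilibrium {n : ℕ} (α : ℝ) (s : Fin n → Finset (Fin n)) : Prop :=
  ∀ (v : Fin n) (t : Finset (Fin n)), cost α s v ≤ cost α (Function.update s v t) v

/-- Radius `rad(G) = min_v D(v)`. -/
noncomputable def radius {n : ℕ} (G : SimpleGraph (Fin n)) : ℕ∞ :=
  ⨅ v, ecc G v

/-- Diameter `diam(G) = max_v D(v)`. -/
noncomputable def diam {n : ℕ} (G : SimpleGraph (Fin n)) : ℕ∞ :=
  ⨆ v, ecc G v

/-- Interpret an extended natural number as a real number (`⊤ ↦ 0`). -/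
noncomputable def entoR (x : ℕ∞) : ℝ := ((x : ℝ≥0∞)).toReal

/-- `T` is a shortest path tree of `G` rooted at `b`: a spanning tree of `G`
preserving all distances from `b`. -/
def IsSPT {n : ℕ} (G T : SimpleGraph (Fin n)) (b : Fin n) : Prop :=
  T ≤ G ∧ T.IsTree ∧ ∀ v, T.edist b v = G.edist b v

/-- `p` is the parent of `a` in the tree `T` rooted at `b`. -/
def IsParent {n : ℕ} (T : SimpleGraph (Fin n)) (b a p : Fin n) : Prop :=
  T.Adj a p ∧ T.edist b p + 1 = T.edist b a

/-- The vertex set `B` (with more than two vertices) induces a biconnected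
subgraph: removing any single vertex leaves it connected. -/
def IsBiconnected {n : ℕ} (G : SimpleGraph (Fin n)) (B : Finset (Fin n)) : Prop :=
  2 < B.card ∧ ∀ v ∈ B, (G.induce ((B : Set (Fin n)) \ {v})).Connected

/-- `B` is (the vertex set of) a biconnected component of `G`: a maximal
biconnected subgraph with more than two vertices. -/
def IsBicomp {n : ℕ} (G : SimpleGraph (Fin n)) (B : Finset (Fin n)) : Prop :=
  IsBiconnected G B ∧ ∀ B' : Finset (Fin n), B ⊆ B' → IsBiconnected G B' → B' = B

/-- The induced subgraph of `G` on the vertex set `B`. -/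
def Hgraph {n : ℕ} (G : SimpleGraph (Fin n)) (B : Finset (Fin n)) :
    SimpleGraph ((B : Set (Fin n))) :=
  G.induce (B : Set (Fin n))

/-- The degree of `v` inside the induced subgraph on `B`. -/
noncomputable def degH {n : ℕ} (G : SimpleGraph (Fin n)) (B : Finset (Fin n)) (v : Fin n) : ℕ :=
  {u : Fin n | u ∈ B ∧ G.Adj v u}.ncard

/-- A min cycle: a cycle whose internal (cycle) distances agree with the
distances in `G`, i.e. an isometric cycle. -/
def IsMinCycle {n : ℕ} (G : SimpleGraph (Fin n)) {v : Fin n} (c : G.Walk v v) : Prop :=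
  c.IsCycle ∧ ∀ x₁ ∈ c.support, ∀ x₂ ∈ c.support,
    c.toSubgraph.spanningCoe.edist x₁ x₂ = G.edist x₁ x₂

/-- A directed cycle: going around the cycle, each vertex buys the edge to its
successor (in one of the two cyclic orientations). -/
def IsDirectedCycle {n : ℕ} (s : Fin n → Finset (Fin n)) {v : Fin n}
    (c : (graph n s).Walk v v) : Prop :=
  (∀ d ∈ c.darts, d.toProd.2 ∈ s d.toProd.1) ∨ (∀ d ∈ c.darts, d.toProd.1 ∈ s d.toProd.2)

/-- A shopping vertex of the biconnected component `B` w.r.t. the shortest path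
tree `T`: a vertex of `B` buying an edge of the component that is not in `T`. -/
def IsShopping {n : ℕ} (s : Fin n → Finset (Fin n)) (T : SimpleGraph (Fin n))
    (B : Finset (Fin n)) (u : Fin n) : Prop :=
  u ∈ B ∧ ∃ w ∈ B, w ∈ s u ∧ (graph n s).Adj u w ∧ ¬ T.Adj u w

/-- The social cost of profile `s`. -/
noncomputable def socialCost {n : ℕ} (α : ℝ) (s : Fin n → Finset (Fin n)) : ℝ≥0∞ :=
  ∑ v, cost α s v

end NCG

open NCG
section Aux

variable {n : ℕ} {α : ℝ} {s : Fin n → Finset (Fin n)}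

lemma graph_adj {x y : Fin n} :
    (graph n s).Adj x y ↔ x ≠ y ∧ (y ∈ s x ∨ x ∈ s y) := by
  rw [NCG.graph, SimpleGraph.fromRel_adj]

lemma le_ecc {G : SimpleGraph (Fin n)} (v u : Fin n) : G.edist v u ≤ ecc G v :=
  le_iSup (fun u => G.edist v u) u

lemma ecc_le {G : SimpleGraph (Fin n)} {v : Fin n} {X : ℕ∞}
    (h : ∀ u, G.edist v u ≤ X) : ecc G v ≤ X := iSup_le h

lemma enat_coe_ne_top {E : ℕ∞} (h : E ≠ ⊤) : (E : ℝ≥0∞) ≠ ⊤ := by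
  have : (E : ℝ≥0∞) < ((⊤ : ℕ∞) : ℝ≥0∞) := ENat.toENNReal_lt.mpr (lt_top_iff_ne_top.mpr h)
  rw [ENat.toENNReal_top] at this
  exact this.ne

lemma ecc_ne_top (heq : IsEquilibrium α s) (v : Fin n) : ecc (graph n s) v ≠ ⊤ := by
  intro htop
  have h := heq v (Finset.univ.erase v)
  have hecc' : ecc (graph n (Function.update s v (Finset.univ.erase v))) v ≤ 1 := by
    apply ecc_le
    intro u
    rcases eq_or_ne u v with rfl | hne
    · simp [SimpleGraph.edist_self]
    · have hadj : (graph n (Function.update s v (Finset.univ.erase v))).Adj v u := by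
        rw [graph_adj]
        exact ⟨hne.symm, Or.inl (by simp [Function.update_self, Finset.mem_erase, hne])⟩
      rw [← SimpleGraph.edist_eq_one_iff_adj] at hadj
      exact le_of_eq hadj
  have hlt : cost α (Function.update s v (Finset.univ.erase v)) v ≠ ⊤ := by
    unfold cost
    intro heqtop
    have h1 : ENNReal.ofReal α *
        ((Function.update s v (Finset.univ.erase v) v).card : ℝ≥0∞) ≠ ⊤ :=
      ENNReal.mul_ne_top ENNReal.ofReal_ne_top (ENNReal.natCast_ne_top _)
    have h2 : ((ecc (graph n (Function.update s v (Finset.univ.erase v))) v : ℕ∞) : ℝ≥0∞) ≠ ⊤ := by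
      apply enat_coe_ne_top
      intro ht
      rw [ht] at hecc'
      exact (lt_irrefl _ (lt_of_le_of_lt hecc' (Ne.lt_top (by simp)))).elim
    exact (ENNReal.add_ne_top.mpr ⟨h1, h2⟩) heqtop
  apply hlt
  refine top_le_iff.mp ?_
  calc (⊤ : ℝ≥0∞) = ENNReal.ofReal α * ((s v).card : ℝ≥0∞) + ((⊤ : ℕ∞) : ℝ≥0∞) := by
        simp
    _ = cost α s v := by rw [cost, htop]
    _ ≤ _ := h

lemma key_ineq (heq : IsEquilibrium α s) (v : Fin n) (t : Finset (Fin n))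
    (hcard : t.card + 1 ≤ (s v).card) (D : ℕ)
    (hecc : ecc (graph n (Function.update s v t)) v ≤ ecc (graph n s) v + (D : ℕ∞)) :
    ENNReal.ofReal α ≤ (D : ℝ≥0∞) := by
  set A := ENNReal.ofReal α with hA
  set E := ecc (graph n s) v with hE
  have hEtop : E ≠ ⊤ := ecc_ne_top heq v
  have h := heq v t
  rw [cost, cost, Function.update_self] at h
  have hecc' : ((ecc (graph n (Function.update s v t)) v : ℕ∞) : ℝ≥0∞) ≤
      (E : ℝ≥0∞) + (D : ℝ≥0∞) := by
    calc ((ecc (graph n (Function.update s v t)) v : ℕ∞) : ℝ≥0∞) ≤ ((E + (D:ℕ∞) : ℕ∞) : ℝ≥0∞) :=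
          ENat.toENNReal_le.mpr hecc
      _ = (E : ℝ≥0∞) + ((D : ℕ∞) : ℝ≥0∞) := by rw [ENat.toENNReal_add]
      _ = (E : ℝ≥0∞) + (D : ℝ≥0∞) := by norm_cast
  have hmul : A * (t.card : ℝ≥0∞) + A ≤ A * ((s v).card : ℝ≥0∞) := by
    calc A * (t.card : ℝ≥0∞) + A = A * ((t.card : ℝ≥0∞) + 1) := by ring
      _ ≤ A * ((s v).card : ℝ≥0∞) := by
          apply mul_le_mul_right
          exact_mod_cast Nat.cast_le.mpr hcard
  have hchain : A * (t.card : ℝ≥0∞) + (A + (E : ℝ≥0∞)) ≤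
      A * (t.card : ℝ≥0∞) + ((E : ℝ≥0∞) + (D : ℝ≥0∞)) := by
    calc A * (t.card : ℝ≥0∞) + (A + (E:ℝ≥0∞)) = (A * (t.card : ℝ≥0∞) + A) + (E:ℝ≥0∞) := by ring
      _ ≤ A * ((s v).card : ℝ≥0∞) + (E:ℝ≥0∞) := add_le_add_left hmul _
      _ ≤ A * (t.card : ℝ≥0∞) + ((ecc (graph n (Function.update s v t)) v : ℕ∞) : ℝ≥0∞) := h
      _ ≤ A * (t.card : ℝ≥0∞) + ((E:ℝ≥0∞) + (D : ℝ≥0∞)) := add_le_add_right hecc' _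
  have h2 := (ENNReal.add_le_add_iff_left
    (ENNReal.mul_ne_top ENNReal.ofReal_ne_top (ENNReal.natCast_ne_top _))).mp hchain
  have h3 : (E:ℝ≥0∞) + A ≤ (E:ℝ≥0∞) + (D : ℝ≥0∞) := by
    calc (E:ℝ≥0∞) + A = A + (E:ℝ≥0∞) := by ring
      _ ≤ (E:ℝ≥0∞) + (D:ℝ≥0∞) := h2
  exact (ENNReal.add_le_add_iff_left (enat_coe_ne_top hEtop)).mp h3

end Aux
section Walks

open SimpleGraph

variable {V : Type*}

/-- A walk along consecutive vertices `g i, g (i+1), …, g (i+len)`. -/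
def chainW (H : SimpleGraph V) (g : ℕ → V) :
    (i len : ℕ) → (∀ j, i ≤ j → j < i + len → H.Adj (g j) (g (j+1))) →
      H.Walk (g i) (g (i+len))
  | _, 0, _ => SimpleGraph.Walk.nil
  | i, len+1, h =>
    (chainW H g i len (fun j h1 h2 => h j h1 (by omega))).concat (h (i+len) (by omega) (by omega))

lemma chainW_length (H : SimpleGraph V) (g : ℕ → V) :
    ∀ (i len : ℕ) (h), (chainW H g i len h).length = len
  | _, 0, _ => rfl
  | i, len+1, h => by
    rw [chainW, SimpleGraph.Walk.length_concat, chainW_length]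

lemma chainW_support (H : SimpleGraph V) (g : ℕ → V) :
    ∀ (i len : ℕ) (h), (chainW H g i len h).support =
      (List.range (len+1)).map (fun t => g (i+t))
  | _, 0, _ => rfl
  | i, len+1, h => by
    rw [chainW, SimpleGraph.Walk.support_concat, chainW_support]
    simp [List.range_succ]

lemma chainW_edges (H : SimpleGraph V) (g : ℕ → V) :
    ∀ (i len : ℕ) (h) (e : Sym2 V), e ∈ (chainW H g i len h).edges →
      ∃ j, i ≤ j ∧ j < i + len ∧ e = s(g j, g (j+1))
  | _, 0, _, e => by simp [chainW]
  | i, len+1, h, e => by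
    rw [chainW, SimpleGraph.Walk.edges_concat]
    intro he
    rw [List.concat_eq_append] at he
    rcases List.mem_append.mp he with hmem | heq
    · obtain ⟨j, h1, h2, h3⟩ := chainW_edges H g i len _ e hmem
      exact ⟨j, h1, by omega, h3⟩
    · exact ⟨i+len, by omega, by omega, by simpa [Nat.add_assoc] using heq⟩

/-- Splitting a duplicate-free walk at an edge occurrence. -/
lemma walk_split {G : SimpleGraph V} {v0 v1 : V} :
    ∀ {a x : V} (p : G.Walk a x), p.edges.Nodup → s(v0,v1) ∈ p.edges →
    ∃ (w0 w1 : V), ((w0 = v0 ∧ w1 = v1) ∨ (w0 = v1 ∧ w1 = v0)) ∧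
      ∃ (q : G.Walk a w0) (r : G.Walk w1 x), s(v0,v1) ∉ q.edges ∧ s(v0,v1) ∉ r.edges ∧
        q.length + 1 + r.length = p.length := by
  intro a x p
  induction p with
  | nil => simp
  | @cons a b x hadj p' ih =>
    intro hnd he
    rw [SimpleGraph.Walk.edges_cons] at he hnd
    have hnd' := (List.nodup_cons.mp hnd).2
    have hnotmem := (List.nodup_cons.mp hnd).1
    rcases List.mem_cons.mp he with heq | hmem
    · refine ⟨a, b, ?_, SimpleGraph.Walk.nil, p', by simp, ?_, by simp [Nat.add_comm]⟩
      · rcases Sym2.eq_iff.mp heq with ⟨h1, h2⟩ | ⟨h1, h2⟩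
        · exact Or.inl ⟨h1.symm, h2.symm⟩
        · exact Or.inr ⟨h2.symm, h1.symm⟩
      · rw [heq]; exact hnotmem
    · obtain ⟨w0, w1, hor, q, r, hq, hr, hlen⟩ := ih hnd' hmem
      refine ⟨w0, w1, hor, SimpleGraph.Walk.cons hadj q, r, ?_, hr, by simp [← hlen]; omega⟩
      rw [SimpleGraph.Walk.edges_cons]
      intro hc
      rcases List.mem_cons.mp hc with heq2 | hmem2
      · exact hnotmem (heq2 ▸ hmem)
      · exact hq hmem2

lemma nodup_getVert_inj {G : SimpleGraph V} :
    ∀ {u v : V} (p : G.Walk u v), p.support.Nodup → ∀ {a b}, a ≤ p.length → b ≤ p.length →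
      p.getVert a = p.getVert b → a = b := by
  intro u v p
  induction p with
  | nil =>
    intro _ a b ha hb _
    rw [SimpleGraph.Walk.length_nil] at ha hb
    omega
  | @cons u w v hadj q ih =>
    intro hnd a b ha hb heq
    rw [SimpleGraph.Walk.support_cons, List.nodup_cons] at hnd
    rw [SimpleGraph.Walk.length_cons] at ha hb
    match a, b with
    | 0, 0 => rfl
    | 0, b+1 =>
      exfalso
      rw [SimpleGraph.Walk.getVert_zero, SimpleGraph.Walk.getVert_cons_succ] at heq
      exact hnd.1 (SimpleGraph.Walk.mem_support_iff_exists_getVert.mpr ⟨b, heq.symm, by omega⟩)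
    | a+1, 0 =>
      exfalso
      rw [SimpleGraph.Walk.getVert_zero, SimpleGraph.Walk.getVert_cons_succ] at heq
      exact hnd.1 (SimpleGraph.Walk.mem_support_iff_exists_getVert.mpr ⟨a, heq, by omega⟩)
    | a+1, b+1 =>
      rw [SimpleGraph.Walk.getVert_cons_succ, SimpleGraph.Walk.getVert_cons_succ] at heq
      have := ih hnd.2 (by omega) (by omega) heq
      omega

lemma cycle_getVert_inj {G : SimpleGraph V} {u : V} {c : G.Walk u u} (hc : c.IsCycle) :
    ∀ {a b}, a < c.length → b < c.length → c.getVert a = c.getVert b → a = b := by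
  match c with
  | SimpleGraph.Walk.nil => exact (hc.ne_nil rfl).elim
  | SimpleGraph.Walk.cons hadj q =>
    have hnd : q.support.Nodup := by
      have := (SimpleGraph.Walk.isCycle_def _ |>.mp hc).2.2
      simpa using this
    intro a b ha hb heq
    rw [SimpleGraph.Walk.length_cons] at ha hb
    match a, b with
    | 0, 0 => rfl
    | 0, b+1 =>
      exfalso
      rw [SimpleGraph.Walk.getVert_zero, SimpleGraph.Walk.getVert_cons_succ] at heq
      have : b = q.length := nodup_getVert_inj q hnd (by omega) (le_refl _)
        (by rw [SimpleGraph.Walk.getVert_length, ← heq])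
      omega
    | a+1, 0 =>
      exfalso
      rw [SimpleGraph.Walk.getVert_zero, SimpleGraph.Walk.getVert_cons_succ] at heq
      have : a = q.length := nodup_getVert_inj q hnd (by omega) (le_refl _)
        (by rw [SimpleGraph.Walk.getVert_length, heq])
      omega
    | a+1, b+1 =>
      rw [SimpleGraph.Walk.getVert_cons_succ, SimpleGraph.Walk.getVert_cons_succ] at heq
      have := nodup_getVert_inj q hnd (a := a) (b := b) (by omega) (by omega) heq
      omega

end Walks
section CycleData

open SimpleGraph

variable {V : Type*} {G : SimpleGraph V} {u : V}

lemma mod_succ_eq (i k : ℕ) (hk : 1 < k) :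
    (i+1) % k = if i % k + 1 = k then 0 else i % k + 1 := by
  have h1 : (i+1) % k = (i % k + 1) % k := by
    conv_lhs => rw [Nat.add_mod]
    rw [Nat.mod_eq_of_lt hk]
  rw [h1]
  by_cases h : i % k + 1 = k
  · rw [if_pos h, h, Nat.mod_self]
  · have hlt : i % k < k := Nat.mod_lt _ (by omega)
    rw [if_neg h, Nat.mod_eq_of_lt (by omega)]

/-- The cyclic vertex function of a closed walk. -/
def cg (c : G.Walk u u) : ℕ → V := fun i => c.getVert (i % c.length)

lemma cg_congr (c : G.Walk u u) {a b : ℕ} (h : a % c.length = b % c.length) :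
    cg c a = cg c b := by unfold cg; rw [h]

lemma cg_zero (c : G.Walk u u) (h : 0 < c.length) : cg c 0 = u := by
  unfold cg; rw [Nat.zero_mod, SimpleGraph.Walk.getVert_zero]

lemma cg_inj {c : G.Walk u u} (hc : c.IsCycle) {a b : ℕ} (h : cg c a = cg c b) :
    a % c.length = b % c.length := by
  have hk : 3 ≤ c.length := hc.three_le_length
  exact cycle_getVert_inj hc (Nat.mod_lt _ (by omega)) (Nat.mod_lt _ (by omega)) h

lemma cg_adj {c : G.Walk u u} (hc : c.IsCycle) (i : ℕ) :
    G.Adj (cg c i) (cg c (i+1)) := by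
  have hk : 3 ≤ c.length := hc.three_le_length
  have hr : i % c.length < c.length := Nat.mod_lt _ (by omega)
  have hadj := c.adj_getVert_succ hr
  show G.Adj (c.getVert (i % c.length)) (c.getVert ((i+1) % c.length))
  rw [mod_succ_eq i c.length (by omega)]
  by_cases h : i % c.length + 1 = c.length
  · rw [if_pos h]
    rw [h] at hadj
    rw [SimpleGraph.Walk.getVert_length] at hadj
    rwa [SimpleGraph.Walk.getVert_zero]
  · rwa [if_neg h]

lemma pattern {k : ℕ} (hk : 0 < k) (P Q : ℕ → Prop)
    (hPQ : ∀ i, P i ∨ Q i)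
    (hQmod : ∀ a b, a % k = b % k → Q a → Q b) :
    (∀ i, P i) ∨ (∀ i, Q i) ∨ ∃ t, Q t ∧ P (t+1) := by
  by_cases hP : ∀ i, P i
  · exact Or.inl hP
  by_cases hQ : ∀ i, Q i
  · exact Or.inr (Or.inl hQ)
  push_neg at hP hQ
  obtain ⟨i0, hi0⟩ := hP
  obtain ⟨j0, hj0⟩ := hQ
  refine Or.inr (Or.inr ?_)
  by_contra hno
  push_neg at hno
  have hQi0 : Q i0 := (hPQ i0).resolve_left hi0
  have hstep : ∀ d, Q (i0 + d) := by
    intro d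
    induction d with
    | zero => exact hQi0
    | succ m ihm =>
      have h1 := hno (i0 + m) ihm
      exact (hPQ (i0+m+1)).resolve_left h1
  set d := (k - i0 % k) + j0 % k with hd
  have hr : i0 % k < k := Nat.mod_lt _ hk
  have hr2 : j0 % k < k := Nat.mod_lt _ hk
  have h1 : i0 ≡ i0 % k [MOD k] := (Nat.mod_modEq i0 k).symm
  have h2 : i0 + d ≡ i0 % k + d [MOD k] := h1.add_right _
  have h3 : i0 % k + d = k + j0 % k := by omega
  have h4 : k + j0 % k ≡ 0 + j0 % k [MOD k] :=
    Nat.ModEq.add_right _ ((Nat.modEq_zero_iff_dvd).mpr dvd_rfl)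
  have h5 : (i0 + d) % k = j0 % k := by
    have h6 := h2.trans (h3 ▸ h4)
    unfold Nat.ModEq at h6
    rw [h6, Nat.zero_add, Nat.mod_eq_of_lt hr2]
  exact hj0 (hQmod _ _ h5 (hstep d))

end CycleData
section Iso

open SimpleGraph

variable {V : Type*} [DecidableEq V] {G : SimpleGraph V}

lemma mincycle_iso_aux {k : ℕ} (hk : 3 ≤ k) (g : ℕ → V)
    (hgi : ∀ a b, g a = g b → a % k = b % k)
    (hadj : ∀ i, G.Adj (g i) (g (i+1)))
    (hmin : ∀ (w : V) (c' : G.Walk w w), c'.IsCycle → k ≤ c'.length) :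
    ∀ i d, 1 ≤ d → 2*d ≤ k → (d : ℕ∞) ≤ G.edist (g i) (g (i+d)) := by
  intro i d h1 h2
  by_contra hcon
  push_neg at hcon
  have htop : G.edist (g i) (g (i+d)) ≠ ⊤ := by
    intro ht; rw [ht] at hcon; exact not_top_lt hcon
  obtain ⟨w, hw⟩ := SimpleGraph.exists_walk_of_edist_ne_top htop
  set p := w.bypass with hpdef
  have hp : p.IsPath := SimpleGraph.Walk.bypass_isPath w
  have hplen : p.length < d := by
    have h3 : (p.length : ℕ∞) ≤ w.length := by
      exact_mod_cast Nat.cast_le.mpr (SimpleGraph.Walk.length_bypass_le w)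
    rw [hw] at h3
    exact_mod_cast lt_of_le_of_lt h3 hcon
  set A := chainW G g i d (fun j _ _ => hadj j) with hAdef
  have hApath : A.IsPath := by
    apply SimpleGraph.Walk.IsPath.mk'
    rw [hAdef, chainW_support]
    apply List.Nodup.map_on _ List.nodup_range
    intro t1 ht1 t2 ht2 heq
    rw [List.mem_range] at ht1 ht2
    have h3 := hgi _ _ heq
    have h4 := Nat.ModEq.add_left_cancel' i h3
    unfold Nat.ModEq at h4
    rw [Nat.mod_eq_of_lt (by omega), Nat.mod_eq_of_lt (by omega)] at h4
    exact h4
  set H := SimpleGraph.fromEdgeSet {e | e ∈ p.edges ∨ e ∈ A.edges} with hHdef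
  have hpH : ∀ e ∈ p.edges, e ∈ H.edgeSet := by
    intro e he
    rw [hHdef, SimpleGraph.edgeSet_fromEdgeSet]
    exact ⟨Or.inl he, G.not_isDiag_of_mem_edgeSet (p.edges_subset_edgeSet he)⟩
  have hAH : ∀ e ∈ A.edges, e ∈ H.edgeSet := by
    intro e he
    rw [hHdef, SimpleGraph.edgeSet_fromEdgeSet]
    exact ⟨Or.inr he, G.not_isDiag_of_mem_edgeSet (A.edges_subset_edgeSet he)⟩
  have hHle : H ≤ G := by
    intro a b hab
    rw [hHdef, SimpleGraph.fromEdgeSet_adj] at hab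
    rcases hab.1 with h | h
    · exact p.adj_of_mem_edges h
    · exact A.adj_of_mem_edges h
  have hne : (⟨p.transfer H hpH, hp.transfer hpH⟩ : H.Path (g i) (g (i+d))) ≠
      ⟨A.transfer H hAH, hApath.transfer hAH⟩ := by
    intro hcontra
    have h5 : (p.transfer H hpH).length = (A.transfer H hAH).length :=
      congrArg (fun q : H.Path (g i) (g (i+d)) => (q : H.Walk (g i) (g (i+d))).length) hcontra
    rw [SimpleGraph.Walk.length_transfer, SimpleGraph.Walk.length_transfer] at h5
    rw [hAdef, chainW_length] at h5
    omega
  have hnoacyc : ¬ H.IsAcyclic := by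
    intro hacyc
    exact hne (SimpleGraph.isAcyclic_iff_path_unique.mp hacyc _ _)
  unfold SimpleGraph.IsAcyclic at hnoacyc
  push_neg at hnoacyc
  obtain ⟨x, cw, hcw⟩ := hnoacyc
  have hcycG : (cw.mapLe hHle).IsCycle := hcw.mapLe hHle
  have hklen : k ≤ (cw.mapLe hHle).length := hmin x _ hcycG
  have hlenmap : (cw.mapLe hHle).length = cw.length := SimpleGraph.Walk.length_map _ _
  have hnd : cw.edges.Nodup := hcw.isCircuit.isTrail.edges_nodup
  have hsub : cw.edges ⊆ p.edges ++ A.edges := by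
    intro e he
    have h6 := cw.edges_subset_edgeSet he
    rw [hHdef, SimpleGraph.edgeSet_fromEdgeSet] at h6
    exact List.mem_append.mpr h6.1
  have hsp := (List.subperm_of_subset hnd hsub).length_le
  rw [List.length_append, SimpleGraph.Walk.length_edges, SimpleGraph.Walk.length_edges] at hsp
  rw [SimpleGraph.Walk.length_edges] at hsp
  have hAlen : A.length = d := by rw [hAdef, chainW_length]
  omega

lemma mincycle_iso {k : ℕ} (hk : 3 ≤ k) (g : ℕ → V)
    (hgc : ∀ a b, a % k = b % k → g a = g b)
    (hgi : ∀ a b, g a = g b → a % k = b % k)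
    (hadj : ∀ i, G.Adj (g i) (g (i+1)))
    (hmin : ∀ (w : V) (c' : G.Walk w w), c'.IsCycle → k ≤ c'.length) :
    ∀ i d, d ≤ k → ((min d (k-d) : ℕ) : ℕ∞) ≤ G.edist (g i) (g (i+d)) := by
  intro i d hd
  rcases Nat.eq_zero_or_pos (min d (k-d)) with h0 | hpos
  · rw [h0]; simp
  by_cases hcase : 2*d ≤ k
  · rw [show min d (k-d) = d from by omega]
    exact mincycle_iso_aux hk g hgi hadj hmin i d (by omega) hcase
  · have h2 : 2*(k-d) ≤ k := by omega
    have := mincycle_iso_aux hk g hgi hadj hmin (i+d) (k-d) (by omega) h2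
    have hgeq : g (i+d+(k-d)) = g i := by
      apply hgc
      rw [show i+d+(k-d) = i + k from by omega, Nat.add_mod_right]
    rw [hgeq] at this
    rw [show min d (k-d) = k - d from by omega]
    rw [SimpleGraph.edist_comm]
    exact this

end Iso
section ArgA

open SimpleGraph

variable {n : ℕ} {α : ℝ} {s : Fin n → Finset (Fin n)}

lemma argA {k : ℕ} (hk : 3 ≤ k) (heq : IsEquilibrium α s) (g : ℕ → Fin n)
    (hgc : ∀ a b, a % k = b % k → g a = g b)
    (hgi : ∀ a b, g a = g b → a % k = b % k)
    (hadj : ∀ i, (graph n s).Adj (g i) (g (i+1)))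
    (hiso : ∀ i d, d ≤ k → ((min d (k-d) : ℕ) : ℕ∞) ≤ (graph n s).edist (g i) (g (i+d)))
    (hF : ∀ i, g (i+1) ∈ s (g i))
    (hmax : ∀ j, ecc (graph n s) (g j) ≤ ecc (graph n s) (g 0)) :
    ENNReal.ofReal α ≤ ((k/2 : ℕ) : ℝ≥0∞) := by
  set m := (k+1)/2 with hm
  set u := g 0 with hu
  set t : Finset (Fin n) := (s u).erase (g 1) with ht
  set s' := Function.update s u t with hs'
  have hsurv : ∀ {x y : Fin n}, (graph n s).Adj x y → s(x,y) ≠ s(u, g 1) →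
      (graph n s').Adj x y := by
    intro x y hxy hne
    rw [graph_adj] at hxy ⊢
    refine ⟨hxy.1, ?_⟩
    rcases hxy.2 with h | h
    · by_cases hxu : x = u
      · subst hxu
        left
        rw [hs', Function.update_self, ht]
        refine Finset.mem_erase.mpr ⟨?_, h⟩
        intro hy1
        exact hne (by rw [hy1])
      · left; rw [hs', Function.update_of_ne hxu]; exact h
    · by_cases hyu : y = u
      · subst hyu
        right
        rw [hs', Function.update_self, ht]
        refine Finset.mem_erase.mpr ⟨?_, h⟩
        intro hx1
        exact hne (by rw [hx1, Sym2.eq_swap])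
      · right; rw [hs', Function.update_of_ne hyu]; exact h
  have hsurvE : ∀ e ∈ (graph n s).edgeSet, e ≠ s(u, g 1) → e ∈ (graph n s').edgeSet := by
    intro e
    induction e with
    | _ x y => exact fun h hne => hsurv h hne
  -- backward arc from g m to g 0 = u
  have hadjB : ∀ j, m ≤ j → j < m + (k-m) → (graph n s').Adj (g j) (g (j+1)) := by
    intro j hj1 hj2
    apply hsurv (hadj j)
    intro hcontra
    rcases Sym2.eq_iff.mp hcontra with ⟨h1, _⟩ | ⟨h1, h2⟩
    · have := hgi _ _ h1
      rw [Nat.mod_eq_of_lt (by omega), Nat.zero_mod] at this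
      omega
    · have := hgi _ _ h1
      rw [Nat.mod_eq_of_lt (by omega), Nat.mod_eq_of_lt (by omega)] at this
      omega
  have hgk : g (m + (k-m)) = g 0 := hgc _ _ (by
    rw [show m+(k-m) = k from by omega, Nat.mod_self, Nat.zero_mod])
  set B := (chainW (graph n s') g m (k-m) hadjB).copy rfl hgk with hB
  have hBlen : B.length = k - m := by
    rw [hB, SimpleGraph.Walk.length_copy, chainW_length]
  have hdm0 : (graph n s').edist (g m) (g 0) ≤ ((k - m : ℕ) : ℕ∞) := by
    have h1 := SimpleGraph.Walk.edist_le B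
    rwa [hBlen] at h1
  have hd0m : (graph n s').edist (g 0) (g m) ≤ ((k - m : ℕ) : ℕ∞) := by
    have h1 := SimpleGraph.Walk.edist_le B.reverse
    rwa [SimpleGraph.Walk.length_reverse, hBlen] at h1
  -- forward arc from g 1 to g m
  have hadjF : ∀ j, 1 ≤ j → j < 1 + (m-1) → (graph n s').Adj (g j) (g (j+1)) := by
    intro j hj1 hj2
    apply hsurv (hadj j)
    intro hcontra
    rcases Sym2.eq_iff.mp hcontra with ⟨h1, _⟩ | ⟨_, h2⟩
    · have := hgi _ _ h1
      rw [Nat.mod_eq_of_lt (by omega), Nat.zero_mod] at this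
      omega
    · have := hgi _ _ h2
      rw [Nat.mod_eq_of_lt (by omega), Nat.zero_mod] at this
      omega
  have hg1m : g (1 + (m-1)) = g m := congrArg g (by omega)
  set Fw := (chainW (graph n s') g 1 (m-1) hadjF).copy rfl hg1m with hFw
  have hFwlen : Fw.length = m - 1 := by
    rw [hFw, SimpleGraph.Walk.length_copy, chainW_length]
  have hdm1 : (graph n s').edist (g m) (g 1) ≤ ((m - 1 : ℕ) : ℕ∞) := by
    have h1 := SimpleGraph.Walk.edist_le Fw.reverse
    rwa [SimpleGraph.Walk.length_reverse, hFwlen] at h1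
  -- rerouting: distances from g m do not increase
  have hrer : ∀ x, (graph n s').edist (g m) x ≤ (graph n s).edist (g m) x := by
    intro x
    by_cases htop : (graph n s).edist (g m) x = ⊤
    · rw [htop]; exact le_top
    obtain ⟨w, hw⟩ := SimpleGraph.exists_walk_of_edist_ne_top htop
    set p := w.bypass with hp0
    have hp : p.IsPath := SimpleGraph.Walk.bypass_isPath w
    have hplen : (p.length : ℕ∞) ≤ (graph n s).edist (g m) x := by
      rw [← hw]
      exact_mod_cast Nat.cast_le.mpr (SimpleGraph.Walk.length_bypass_le w)
    by_cases he : s(u, g 1) ∈ p.edges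
    · obtain ⟨w0, w1, hor, q, r, hq, hr, hsum⟩ :=
        walk_split p hp.isTrail.edges_nodup he
      have hre : ∀ e ∈ r.edges, e ∈ (graph n s').edgeSet :=
        fun e hee => hsurvE e (r.edges_subset_edgeSet hee) (fun hh => hr (hh ▸ hee))
      rcases hor with ⟨h0, h1⟩ | ⟨h0, h1⟩
      · subst h0; subst h1
        have hql : (k - m : ℕ) ≤ q.length := by
          have hi := hiso m (k-m) (by omega)
          rw [hgk, show min (k-m) (k-(k-m)) = k-m from by omega] at hi
          exact_mod_cast le_trans hi (SimpleGraph.Walk.edist_le q)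
        calc (graph n s').edist (g m) x
            ≤ (graph n s').edist (g m) (g 1) + (graph n s').edist (g 1) x :=
              SimpleGraph.edist_triangle
          _ ≤ ((m-1 : ℕ) : ℕ∞) + (r.transfer (graph n s') hre).length :=
              add_le_add hdm1 (SimpleGraph.Walk.edist_le _)
          _ = ((m-1 : ℕ) : ℕ∞) + (r.length : ℕ∞) := by
              rw [SimpleGraph.Walk.length_transfer]
          _ ≤ (p.length : ℕ∞) := by
              exact_mod_cast Nat.cast_le.mpr (show m-1+r.length ≤ p.length from by omega)
          _ ≤ (graph n s).edist (g m) x := hplen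
      · subst h0; subst h1
        have hql : (m - 1 : ℕ) ≤ q.length := by
          have hi := hiso m (k-m+1) (by omega)
          have hg1 : g (m + (k-m+1)) = g 1 := hgc _ _ (by
            rw [show m+(k-m+1) = k+1 from by omega, Nat.add_mod_left])
          rw [hg1, show min (k-m+1) (k-(k-m+1)) = m-1 from by omega] at hi
          exact_mod_cast le_trans hi (SimpleGraph.Walk.edist_le q)
        calc (graph n s').edist (g m) x
            ≤ (graph n s').edist (g m) (g 0) + (graph n s').edist (g 0) x :=
              SimpleGraph.edist_triangle
          _ ≤ ((k-m : ℕ) : ℕ∞) + (r.transfer (graph n s') hre).length :=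
              add_le_add hdm0 (SimpleGraph.Walk.edist_le _)
          _ = ((k-m : ℕ) : ℕ∞) + (r.length : ℕ∞) := by
              rw [SimpleGraph.Walk.length_transfer]
          _ ≤ (p.length : ℕ∞) := by
              exact_mod_cast Nat.cast_le.mpr (show k-m+r.length ≤ p.length from by omega)
          _ ≤ (graph n s).edist (g m) x := hplen
    · have hpe : ∀ e ∈ p.edges, e ∈ (graph n s').edgeSet :=
        fun e hee => hsurvE e (p.edges_subset_edgeSet hee) (fun hh => he (hh ▸ hee))
      calc (graph n s').edist (g m) x ≤ (p.transfer (graph n s') hpe).length :=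
            SimpleGraph.Walk.edist_le _
        _ = (p.length : ℕ∞) := by rw [SimpleGraph.Walk.length_transfer]
        _ ≤ (graph n s).edist (g m) x := hplen
  have heccb : ecc (graph n s') u ≤ ecc (graph n s) u + ((k-m : ℕ) : ℕ∞) := by
    apply ecc_le
    intro x
    calc (graph n s').edist u x
        ≤ (graph n s').edist u (g m) + (graph n s').edist (g m) x :=
          SimpleGraph.edist_triangle
      _ ≤ ((k-m:ℕ) : ℕ∞) + (graph n s).edist (g m) x := add_le_add hd0m (hrer x)
      _ ≤ ((k-m:ℕ) : ℕ∞) + ecc (graph n s) (g m) := add_le_add_right (le_ecc _ x) _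
      _ ≤ ((k-m:ℕ) : ℕ∞) + ecc (graph n s) u := add_le_add_right (hmax m) _
      _ = ecc (graph n s) u + ((k-m:ℕ) : ℕ∞) := add_comm _ _
  have hmem1 : g 1 ∈ s u := hF 0
  have hcard : t.card + 1 ≤ (s u).card := by
    rw [ht, Finset.card_erase_of_mem hmem1]
    have h1 : 1 ≤ (s u).card := Finset.card_pos.mpr ⟨g 1, hmem1⟩
    omega
  have hfin := key_ineq heq u t hcard (k-m) heccb
  rwa [show k - m = k/2 from by omega] at hfin

end ArgA
section ArgB

open SimpleGraph

lemma reroute_head {V : Type*} {G G' : SimpleGraph V} {u x : V} (D : ℕ)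
    (p : G.Walk u x) (hp : p.IsPath)
    (htrans : ∀ {y z : V}, G.Adj y z → y ≠ u → z ≠ u → G'.Adj y z)
    (hfirst : ∀ w', G.Adj u w' → G'.edist u w' ≤ (D : ℕ∞)) :
    G'.edist u x ≤ (D : ℕ∞) + ((p.length - 1 : ℕ) : ℕ∞) := by
  match p with
  | SimpleGraph.Walk.nil =>
    rw [SimpleGraph.edist_self]
    exact zero_le
  | SimpleGraph.Walk.cons (v := w') h q =>
    rw [SimpleGraph.Walk.cons_isPath_iff] at hp
    have hqe : ∀ e ∈ q.edges, e ∈ G'.edgeSet := by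
      intro e he
      induction e with
      | _ x₁ y₁ =>
        have hadj := q.adj_of_mem_edges he
        have h1 : x₁ ≠ u := fun hh => hp.2 (hh ▸ q.fst_mem_support_of_mem_edges he)
        have h2 : y₁ ≠ u := fun hh => hp.2 (hh ▸ q.snd_mem_support_of_mem_edges he)
        exact htrans hadj h1 h2
    calc G'.edist u x ≤ G'.edist u w' + G'.edist w' x := SimpleGraph.edist_triangle
      _ ≤ (D : ℕ∞) + (q.transfer G' hqe).length :=
          add_le_add (hfirst w' h) (SimpleGraph.Walk.edist_le _)
      _ = (D : ℕ∞) + (q.length : ℕ∞) := by rw [SimpleGraph.Walk.length_transfer]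
      _ = (D : ℕ∞) + (((SimpleGraph.Walk.cons h q).length - 1 : ℕ) : ℕ∞) := by
          rw [SimpleGraph.Walk.length_cons]
          simp

variable {n : ℕ} {α : ℝ} {s : Fin n → Finset (Fin n)}

lemma argB {k : ℕ} (hk : 3 ≤ k) (heq : IsEquilibrium α s) (g : ℕ → Fin n)
    (hgc : ∀ a b, a % k = b % k → g a = g b)
    (hgi : ∀ a b, g a = g b → a % k = b % k)
    (hadj : ∀ i, (graph n s).Adj (g i) (g (i+1)))
    (ha : g (k-1) ∈ s (g 0)) (hb : g 1 ∈ s (g 0)) :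
    ENNReal.ofReal α ≤ (((k+1)/2 - 1 : ℕ) : ℝ≥0∞) := by
  set m := (k+1)/2 with hm
  set u := g 0 with hu
  set t : Finset (Fin n) :=
    insert (g (k/2)) (((s u).erase (g (k-1))).erase (g 1)) with ht
  set s' := Function.update s u t with hs'
  have hne0 : ∀ j, 1 ≤ j → j ≤ k-1 → g j ≠ u := by
    intro j h1 h2 heq'
    have := hgi _ _ heq'
    rw [Nat.mod_eq_of_lt (by omega), Nat.zero_mod] at this
    omega
  have hsurv2 : ∀ {x y : Fin n}, (graph n s).Adj x y → x ≠ u → y ≠ u →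
      (graph n s').Adj x y := by
    intro x y hxy hxu hyu
    rw [graph_adj] at hxy ⊢
    refine ⟨hxy.1, ?_⟩
    rw [hs', Function.update_of_ne hxu, Function.update_of_ne hyu]
    exact hxy.2
  have huz : (graph n s').Adj u (g (k/2)) := by
    rw [graph_adj]
    refine ⟨(hne0 (k/2) (by omega) (by omega)).symm.symm.symm, ?_⟩
    · left
      rw [hs', Function.update_self, ht]
      exact Finset.mem_insert_self _ _
  -- arc from g 1 to g (k/2)
  have hadjZB : ∀ j, 1 ≤ j → j < 1 + (k/2 - 1) → (graph n s').Adj (g j) (g (j+1)) :=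
    fun j h1 h2 => hsurv2 (hadj j) (hne0 j (by omega) (by omega))
      (hne0 (j+1) (by omega) (by omega))
  have hgB : g (1 + (k/2 - 1)) = g (k/2) := congrArg g (by omega)
  set arcZB := (chainW (graph n s') g 1 (k/2-1) hadjZB).copy rfl hgB with harcZB
  have harcZBlen : arcZB.length = k/2 - 1 := by
    rw [harcZB, SimpleGraph.Walk.length_copy, chainW_length]
  -- arc from g (k/2) to g (k-1)
  have hadjZA : ∀ j, k/2 ≤ j → j < k/2 + (k-1-k/2) → (graph n s').Adj (g j) (g (j+1)) :=
    fun j h1 h2 => hsurv2 (hadj j) (hne0 j (by omega) (by omega))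
      (hne0 (j+1) (by omega) (by omega))
  have hgA : g (k/2 + (k-1-k/2)) = g (k-1) := congrArg g (by omega)
  set arcZA := (chainW (graph n s') g (k/2) (k-1-k/2) hadjZA).copy rfl hgA with harcZA
  have harcZAlen : arcZA.length = k-1-k/2 := by
    rw [harcZA, SimpleGraph.Walk.length_copy, chainW_length]
  -- first-step bound
  have hfirst : ∀ w', (graph n s).Adj u w' → (graph n s').edist u w' ≤ (m : ℕ∞) := by
    intro w' hadj'
    by_cases hwa : w' = g (k-1)
    · subst hwa
      have h1 := SimpleGraph.Walk.edist_le (SimpleGraph.Walk.cons huz arcZA)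
      rw [SimpleGraph.Walk.length_cons, harcZAlen] at h1
      have hle : (k-1-k/2) + 1 ≤ m := by omega
      calc (graph n s').edist u (g (k-1)) ≤ ((k-1-k/2 + 1 : ℕ) : ℕ∞) := by exact_mod_cast h1
        _ ≤ (m : ℕ∞) := Nat.cast_le.mpr hle
    · by_cases hwb : w' = g 1
      · subst hwb
        have h1 := SimpleGraph.Walk.edist_le (SimpleGraph.Walk.cons huz arcZB.reverse)
        rw [SimpleGraph.Walk.length_cons, SimpleGraph.Walk.length_reverse, harcZBlen] at h1
        have hle : k/2 - 1 + 1 ≤ m := by omega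
        calc (graph n s').edist u (g 1) ≤ ((k/2 - 1 + 1 : ℕ) : ℕ∞) := by exact_mod_cast h1
          _ ≤ (m : ℕ∞) := Nat.cast_le.mpr hle
      · -- the edge survives
        have hadj'' : (graph n s').Adj u w' := by
          rw [graph_adj] at hadj' ⊢
          refine ⟨hadj'.1, ?_⟩
          rcases hadj'.2 with h | h
          · left
            rw [hs', Function.update_self, ht]
            exact Finset.mem_insert_of_mem
              (Finset.mem_erase.mpr ⟨hwb, Finset.mem_erase.mpr ⟨hwa, h⟩⟩)
          · right
            rw [hs', Function.update_of_ne (Ne.symm hadj'.1)]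
            exact h
        rw [← SimpleGraph.edist_eq_one_iff_adj] at hadj''
        rw [hadj'']
        have hle : 1 ≤ m := by omega
        exact_mod_cast Nat.cast_le.mpr hle
  -- rerouting bound
  have hrer : ∀ x, (graph n s').edist u x ≤ (graph n s).edist u x + ((m-1 : ℕ) : ℕ∞) := by
    intro x
    by_cases htop : (graph n s).edist u x = ⊤
    · rw [htop, top_add]; exact le_top
    obtain ⟨w, hw⟩ := SimpleGraph.exists_walk_of_edist_ne_top htop
    have hp : w.bypass.IsPath := SimpleGraph.Walk.bypass_isPath w
    have hplen : (w.bypass.length : ℕ∞) ≤ (graph n s).edist u x := by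
      rw [← hw]
      exact_mod_cast Nat.cast_le.mpr (SimpleGraph.Walk.length_bypass_le w)
    by_cases hnil : w.bypass.length = 0
    · have hux : u = x := SimpleGraph.Walk.eq_of_length_eq_zero hnil
      subst hux
      rw [SimpleGraph.edist_self]
      exact zero_le
    · have h1 := reroute_head m w.bypass hp (fun h h2 h3 => hsurv2 h h2 h3) hfirst
      calc (graph n s').edist u x ≤ (m : ℕ∞) + ((w.bypass.length - 1 : ℕ) : ℕ∞) := h1
        _ = ((w.bypass.length : ℕ) : ℕ∞) + ((m - 1 : ℕ) : ℕ∞) := by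
            exact_mod_cast (by omega : m + (w.bypass.length - 1) = w.bypass.length + (m-1))
        _ ≤ (graph n s).edist u x + ((m-1 : ℕ) : ℕ∞) := add_le_add_left hplen _
  have heccb : ecc (graph n s') u ≤ ecc (graph n s) u + ((m-1 : ℕ) : ℕ∞) := by
    apply ecc_le
    intro x
    exact le_trans (hrer x) (add_le_add_left (le_ecc _ x) _)
  have haneb : g (k-1) ≠ g 1 := by
    intro heq'
    have := hgi _ _ heq'
    rw [Nat.mod_eq_of_lt (by omega), Nat.mod_eq_of_lt (by omega)] at this
    omega
  have hcard : t.card + 1 ≤ (s u).card := by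
    have h2 : 2 ≤ (s u).card := by
      apply Finset.one_lt_card.mpr
      exact ⟨g (k-1), ha, g 1, hb, haneb⟩
    have hbe : g 1 ∈ (s u).erase (g (k-1)) := Finset.mem_erase.mpr ⟨haneb.symm, hb⟩
    have hc1 : (((s u).erase (g (k-1))).erase (g 1)).card = (s u).card - 2 := by
      rw [Finset.card_erase_of_mem hbe, Finset.card_erase_of_mem ha]
      omega
    have hc2 : t.card ≤ (s u).card - 2 + 1 := by
      rw [ht]
      exact le_trans (Finset.card_insert_le _ _) (by rw [hc1])
    omega
  have hfin := key_ineq heq u t hcard (m-1) heccb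
  exact hfin

end ArgB
section Assemble

open SimpleGraph

variable {n : ℕ} {α : ℝ} {s : Fin n → Finset (Fin n)}

lemma shift_argA {k : ℕ} (hk : 3 ≤ k) (heq : IsEquilibrium α s) (g : ℕ → Fin n)
    (hgc : ∀ a b, a % k = b % k → g a = g b)
    (hgi : ∀ a b, g a = g b → a % k = b % k)
    (hadj : ∀ i, (graph n s).Adj (g i) (g (i+1)))
    (hiso : ∀ i d, d ≤ k → ((min d (k-d) : ℕ) : ℕ∞) ≤ (graph n s).edist (g i) (g (i+d)))
    (hF : ∀ i, g (i+1) ∈ s (g i)) :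
    ENNReal.ofReal α ≤ ((k/2 : ℕ) : ℝ≥0∞) := by
  obtain ⟨b, hbmem, hbmax⟩ := Finset.exists_max_image (Finset.range k)
    (fun j => ecc (graph n s) (g j)) ⟨0, Finset.mem_range.mpr (by omega)⟩
  refine argA hk heq (fun i => g (b + i)) ?_ ?_ ?_ ?_ ?_ ?_
  · intro a b' h
    exact hgc _ _ (Nat.ModEq.add_left b h)
  · intro a b' h
    exact Nat.ModEq.add_left_cancel' b (hgi _ _ h)
  · intro i; exact hadj (b + i)
  · intro i d hd
    have h1 := hiso (b + i) d hd
    rwa [show b+i+d = b+(i+d) from by omega] at h1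
  · intro i; exact hF (b + i)
  · intro j
    have h1 : g (b + j) = g ((b+j) % k) := hgc _ _ (by
      rw [Nat.mod_eq_of_lt (Nat.mod_lt _ (by omega))])
    show ecc (graph n s) (g (b + j)) ≤ ecc (graph n s) (g (b + 0))
    rw [h1]
    exact hbmax ((b+j) % k) (Finset.mem_range.mpr (Nat.mod_lt _ (by omega)))

theorem main_contra (hα : 0 < α) (heq : IsEquilibrium α s)
    (v : Fin n) (c : (graph n s).Walk v v) (hcyc : c.IsCycle)
    (hlt : (c.length : ℝ) < 2 * α - 1) : False := by
  classical
  have hSne : ∃ l, ∃ (w : Fin n) (c' : (graph n s).Walk w w), c'.IsCycle ∧ c'.length = l :=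
    ⟨c.length, v, c, hcyc, rfl⟩
  set k := Nat.find hSne with hkdef
  obtain ⟨v₁, c₁, hc₁, hlen₁⟩ := Nat.find_spec hSne
  have hmin : ∀ (w : Fin n) (c' : (graph n s).Walk w w), c'.IsCycle → k ≤ c'.length :=
    fun w c' h' => Nat.find_le ⟨w, c', h', rfl⟩
  have hk3 : 3 ≤ k := by rw [hkdef, ← hlen₁]; exact hc₁.three_le_length
  have hkR : (k:ℝ) < 2*α - 1 :=
    lt_of_le_of_lt (by exact_mod_cast hmin v c hcyc) hlt
  set g := cg c₁ with hgdef
  have hgc : ∀ a b, a % k = b % k → g a = g b :=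
    fun a b h => cg_congr c₁ (by rw [hlen₁]; exact h)
  have hgi : ∀ a b, g a = g b → a % k = b % k := by
    intro a b h
    have := cg_inj hc₁ h
    rwa [hlen₁] at this
  have hadjg : ∀ i, (graph n s).Adj (g i) (g (i+1)) := cg_adj hc₁
  have hiso := mincycle_iso hk3 g hgc hgi hadjg hmin
  -- the buying dichotomy
  have hPQ : ∀ i, (g (i+1) ∈ s (g i)) ∨ (g i ∈ s (g (i+1))) := by
    intro i
    have := (graph_adj.mp (hadjg i)).2
    tauto
  have hQmod : ∀ a b, a % k = b % k → g a ∈ s (g (a+1)) → g b ∈ s (g (b+1)) := by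
    intro a b h hQ
    rw [← hgc a b h, ← hgc (a+1) (b+1) (Nat.ModEq.add_right 1 h)]
    exact hQ
  -- the key bound
  have hbound : ∃ K : ℕ, 2*K ≤ k ∧ ENNReal.ofReal α ≤ (K : ℝ≥0∞) := by
    rcases pattern (show 0 < k from by omega) _ _ hPQ hQmod with hF | hB | ⟨t₀, hQt, hPt⟩
    · exact ⟨k/2, by omega, shift_argA hk3 heq g hgc hgi hadjg hiso hF⟩
    · -- backward directed: reverse the cyclic order
      set h : ℕ → Fin n := fun j => g (2*k - 1 - j % k) with hhdef
      have hRgc : ∀ a b, a % k = b % k → h a = h b := by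
        intro a b hab
        show g (2*k - 1 - a % k) = g (2*k - 1 - b % k)
        rw [hab]
      have hmodval : ∀ a : ℕ, (2*k - 1 - a % k) % k = k - 1 - a % k := by
        intro a
        have h1 : a % k < k := Nat.mod_lt _ (by omega)
        rw [Nat.mod_eq_sub_mod (by omega), Nat.mod_eq_of_lt (by omega)]
        omega
      have hRgi : ∀ a b, h a = h b → a % k = b % k := by
        intro a b hab
        have := hgi _ _ hab
        rw [hmodval a, hmodval b] at this
        have h1 : a % k < k := Nat.mod_lt _ (by omega)
        have h2 : b % k < k := Nat.mod_lt _ (by omega)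
        omega
      have hRadj : ∀ i, (graph n s).Adj (h i) (h (i+1)) := by
        intro i
        have hr : i % k < k := Nat.mod_lt _ (by omega)
        show (graph n s).Adj (g (2*k - 1 - i % k)) (g (2*k - 1 - (i+1) % k))
        rw [mod_succ_eq i k (by omega)]
        by_cases hcase : i % k + 1 = k
        · rw [if_pos hcase]
          have h1 := (hadjg (k-1)).symm
          have e1 : g (k-1) = g (2*k - 1 - 0) := hgc _ _ (by
            rw [show 2*k-1-0 = k + (k-1) from by omega, Nat.add_mod_left])
          have e2 : g (k-1+1) = g (2*k-1 - i%k) := hgc _ _ (by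
            rw [show k-1+1 = k from by omega, show 2*k-1-i%k = k from by omega, Nat.mod_self])
          rw [e1, e2] at h1
          exact h1
        · rw [if_neg hcase]
          have h1 := (hadjg (2*k - 2 - i%k)).symm
          rw [show 2*k-2-i%k+1 = 2*k-1-i%k from by omega] at h1
          rw [show 2*k-1-(i%k+1) = 2*k-2-i%k from by omega]
          exact h1
      have hRiso : ∀ i d, d ≤ k →
          ((min d (k-d) : ℕ) : ℕ∞) ≤ (graph n s).edist (h i) (h (i+d)) := by
        intro i d hd
        have hr : i % k < k := Nat.mod_lt _ (by omega)
        have hr2 : (i+d) % k < k := Nat.mod_lt _ (by omega)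
        have hm1 : (i%k + d) ≡ (i+d) % k [MOD k] :=
          (Nat.ModEq.add_right d (Nat.mod_modEq i k)).trans (Nat.mod_modEq (i+d) k).symm
        have hm2 : (2*k-1-i%k) + (i%k + d) ≡ (2*k-1-i%k) + ((i+d)%k) [MOD k] :=
          hm1.add_left _
        have e1 : (2*k-1-(i+d)%k + d) + ((i+d)%k) = (2*k-1-i%k) + (i%k + d) := by omega
        have hm3 : (2*k-1-(i+d)%k + d) + ((i+d)%k) ≡ (2*k-1-i%k) + ((i+d)%k) [MOD k] :=
          e1 ▸ hm2
        have hm4 : (2*k-1-(i+d)%k + d) ≡ (2*k-1-i%k) [MOD k] :=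
          Nat.ModEq.add_right_cancel' _ hm3
        have hI := hiso (2*k-1-(i+d)%k) d hd
        have e2 : g (2*k-1-(i+d)%k + d) = g (2*k-1-i%k) := hgc _ _ hm4
        rw [e2] at hI
        show ((min d (k-d) : ℕ) : ℕ∞) ≤
          (graph n s).edist (g (2*k-1-i%k)) (g (2*k-1-(i+d)%k))
        rw [SimpleGraph.edist_comm]
        exact hI
      have hRF : ∀ i, h (i+1) ∈ s (h i) := by
        intro i
        have hr : i % k < k := Nat.mod_lt _ (by omega)
        show g (2*k - 1 - (i+1) % k) ∈ s (g (2*k - 1 - i % k))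
        rw [mod_succ_eq i k (by omega)]
        by_cases hcase : i % k + 1 = k
        · rw [if_pos hcase]
          have h1 := hB (2*k-1)
          have e1 : g (2*k-1+1) = g (2*k-1-i%k) := hgc _ _ (by
            rw [show 2*k-1+1 = 2*k from by omega, show 2*k-1-i%k = k from by omega,
              Nat.mul_mod_left, Nat.mod_self])
          rw [e1] at h1
          rwa [show 2*k-1-0 = 2*k-1 from by omega]
        · rw [if_neg hcase]
          have h1 := hB (2*k-2-i%k)
          rw [show 2*k-2-i%k+1 = 2*k-1-i%k from by omega] at h1
          rwa [show 2*k-1-(i%k+1) = 2*k-2-i%k from by omega]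
      exact ⟨k/2, by omega, shift_argA hk3 heq h hRgc hRgi hRadj hRiso hRF⟩
    · -- double buyer
      set g'' : ℕ → Fin n := fun i => g (t₀ + 1 + i) with hg''
      have hgc'' : ∀ a b, a % k = b % k → g'' a = g'' b :=
        fun a b hab => hgc _ _ (Nat.ModEq.add_left (t₀+1) hab)
      have hgi'' : ∀ a b, g'' a = g'' b → a % k = b % k :=
        fun a b hab => Nat.ModEq.add_left_cancel' (t₀+1) (hgi _ _ hab)
      have hadj'' : ∀ i, (graph n s).Adj (g'' i) (g'' (i+1)) := fun i => hadjg (t₀+1+i)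
      have ha'' : g'' (k-1) ∈ s (g'' 0) := by
        show g (t₀+1+(k-1)) ∈ s (g (t₀+1+0))
        have e1 : g (t₀+1+(k-1)) = g t₀ := hgc _ _ (by
          rw [show t₀+1+(k-1) = t₀ + k from by omega, Nat.add_mod_right])
        rw [e1]
        exact hQt
      have hb'' : g'' 1 ∈ s (g'' 0) := hPt
      refine ⟨(k+1)/2 - 1, by omega, argB hk3 heq g'' hgc'' hgi'' hadj'' ha'' hb''⟩
  obtain ⟨K, hK2, hKb⟩ := hbound
  have hαK : α ≤ (K : ℝ) := by
    rw [← ENNReal.ofReal_natCast K] at hKb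
    exact (ENNReal.ofReal_le_ofReal_iff (Nat.cast_nonneg K)).mp hKb
  have h2K : (2*K : ℝ) ≤ (k : ℝ) := by exact_mod_cast hK2
  linarith

end Assemble
/-- every equilibrium graph has no cycle of length less than `2α − 1`. -/
theorem no_cycle_lt_two_alpha (n : ℕ) (α : ℝ) (hα : 0 < α)
    (s : Fin n → Finset (Fin n)) (hs : IsEquilibrium α s) :
    ∀ (v : Fin n) (c : (graph n s).Walk v v), c.IsCycle →
      ¬ ((c.length : ℝ) < 2 * α - 1) := by
  intro v c hcyc hlt
  exact main_contra hα hs v c hcyc hlt
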